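/- arXiv:1003.3175 — 6 statements merged into one kernel-verified Lean document; each statement's English description precedes it below -/
import Mathlib

section
/- Let Q be a set with binary operations · , \ and / such that for all x, y in Q: (y/x)·x = y and x/(y\x) = y. Then the identity x·(x\y) = y holds for all x, y in Q. -/
/-- Lemma: identities (C) (y/x)·x = y and (T) x/(y\x) = y imply identity (A) x·(x\y) = y. -/
theorem identity_A_of_CT {Q : Type*} (mul ld rd : Q → Q → Q)
    (hC : ∀ x y, mul (rd y x) x = y)
    (hT : ∀ x y, rd x (ld y x) = y) :
    ∀ x y, mul x (ld x y) = y := by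
  intro x y
  have h := hC (ld x y) y
  rwa [hT y x] at h
end

section
/- Let Q be a set with binary operations · , \ and / such that for all x, y in Q: x\(x·y) = y and x/(y\x) = y. Then the identity (y·x)/x = y holds for all x, y in Q. -/
/-- Lemma: identities (B) x\(x·y) = y and (T) x/(y\x) = y imply identity (D) (y·x)/x = y. -/
theorem identity_D_of_BT {Q : Type*} (mul ld rd : Q → Q → Q)
    (hB : ∀ x y, ld x (mul x y) = y)
    (hT : ∀ x y, rd x (ld y x) = y) :
    ∀ x y, rd (mul y x) x = y := by
  intro x y
  calc rd (mul y x) x = rd (mul y x) (ld y (mul y x)) := by rw [hB]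
    _ = y := hT _ _
end

section
/- Let Q be a set with binary operations · , \ and / such that for all x, y in Q: (y·x)/x = y and (x/y)\x = y. Then the identity x\(x·y) = y holds for all x, y in Q. -/
/-- Lemma: identities (D) (y·x)/x = y and (R) (x/y)\x = y imply identity (B) x\(x·y) = y. -/
theorem identity_B_of_DR {Q : Type*} (mul ld rd : Q → Q → Q)
    (hD : ∀ x y, rd (mul y x) x = y)
    (hR : ∀ x y, ld (rd x y) x = y) :
    ∀ x y, ld x (mul x y) = y := by
  intro x y
  have h := hR (mul x y) y
  rwa [hD y x] at h
end

section
/- Let Q be a set with binary operations · , \ and / such that for all x, y in Q: x·(x\y) = y and (x/y)\x = y. Then the identity (y/x)·x = y holds for all x, y in Q. -/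
/-- Lemma: identities (A) x·(x\y) = y and (R) (x/y)\x = y imply identity (C) (y/x)·x = y. -/
theorem identity_C_of_AR {Q : Type*} (mul ld rd : Q → Q → Q)
    (hA : ∀ x y, mul x (ld x y) = y)
    (hR : ∀ x y, ld (rd x y) x = y) :
    ∀ x y, mul (rd y x) x = y := by
  intro x y
  have h := hA (rd y x) y
  rwa [hR y x] at h
end

section
/- Let Q be a set with binary operations · , \ and / such that for all x, y in Q: (y/x)·x = y, x\(x·y) = y, and x/(y\x) = y. Then all six quasigroup identities hold in Q; in particular, for all x, y in Q: x·(x\y) = y and (y·x)/x = y (so (Q, ·, \, /) is an equational quasigroup). -/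
/-- An algebra (Q, ·, \, /) satisfying the given identities satisfies all six
Birkhoff quasigroup identities (A), (C), (B), (D), (T), (R), i.e. it is an
equational quasigroup. -/
theorem quasigroup_of_CBT {Q : Type*} (mul ld rd : Q → Q → Q)
    (hC : ∀ x y, mul (rd y x) x = y)
    (hB : ∀ x y, ld x (mul x y) = y)
    (hT : ∀ x y, rd x (ld y x) = y) :
    (∀ x y, mul x (ld x y) = y) ∧ (∀ x y, mul (rd y x) x = y) ∧
    (∀ x y, ld x (mul x y) = y) ∧ (∀ x y, rd (mul y x) x = y) ∧
    (∀ x y, rd x (ld y x) = y) ∧ (∀ x y, ld (rd x y) x = y) := by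
  refine ⟨fun x y => ?_, hC, hB, fun x y => ?_, hT, fun x y => ?_⟩
  · have h := hC (ld x y) y
    rwa [hT y x] at h
  · have h := hT (mul y x) y
    rwa [hB y x] at h
  · have h := hB (rd x y) y
    rwa [hC y x] at h
end

section
/- Let Q be a set with binary operations · , \ and / such that for all x, y in Q: x·(x\y) = y, (y·x)/x = y, and (x/y)\x = y. Then all six quasigroup identities hold in Q; in particular, for all x, y in Q: (y/x)·x = y and x\(x·y) = y (so (Q, ·, \, /) is an equational quasigroup). -/
/-- An algebra (Q, ·, \, /) satisfying the given identities satisfies all six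
Birkhoff quasigroup identities (A), (C), (B), (D), (T), (R), i.e. it is an
equational quasigroup. -/
theorem quasigroup_of_ADR {Q : Type*} (mul ld rd : Q → Q → Q)
    (hA : ∀ x y, mul x (ld x y) = y)
    (hD : ∀ x y, rd (mul y x) x = y)
    (hR : ∀ x y, ld (rd x y) x = y) :
    (∀ x y, mul x (ld x y) = y) ∧ (∀ x y, mul (rd y x) x = y) ∧
    (∀ x y, ld x (mul x y) = y) ∧ (∀ x y, rd (mul y x) x = y) ∧
    (∀ x y, rd x (ld y x) = y) ∧ (∀ x y, ld (rd x y) x = y) := by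
  refine ⟨hA, ?_, ?_, hD, ?_, hR⟩
  · intro x y
    have h := hA (rd y x) y
    rwa [hR y x] at h
  · intro x y
    have h := hR (mul x y) y
    rwa [hD y x] at h
  · intro x y
    have h := hD (ld y x) y
    rwa [hA y x] at h
end
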